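/- (Mertens' theorem for F_q[t]) Let F_q be a finite field with q elements. As n → ∞, the sum over monic irreducible polynomials l ∈ F_q[t] of degree at most n of q^{-deg(l)} equals log n + A₁ + O(1/n), where A₁ = γ + Σ_{r=1}^{∞} (π_q(r) - q^r/r) q^{-r}, γ is the Euler–Mascheroni constant, and π_q(r) is the number of monic irreducible polynomials of degree r in F_q[t]. -/

import Mathlib

open Filter Asymptotics Real Polynomial

/-- number of monic irreducible polynomials of degree r in F[t] -/
noncomputable def piq (F : Type*) [Field F] [Fintype F] (r : ℕ) : ℕ :=
  Nat.card {l : Polynomial F // l.Monic ∧ Irreducible l ∧ l.natDegree = r}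

/-- the constant A₁ = γ + Σ_{r≥1} (π_q(r) - q^r/r) q^{-r} -/
noncomputable def A1 (F : Type*) [Field F] [Fintype F] : ℝ :=
  Real.eulerMascheroniConstant +
    ∑' r : ℕ, if r = 0 then 0 else
      ((piq F r : ℝ) - (Fintype.card F : ℝ) ^ r / r) * ((Fintype.card F : ℝ) ^ r)⁻¹

open scoped IntermediateField

section Counting

variable (F : Type*) [Field F] [Fintype F]

lemma finite_deg_le (n : ℕ) : {l : Polynomial F | l.natDegree ≤ n}.Finite := by
  apply Set.Finite.subset (Set.finite_range
    (fun v : Fin (n+1) → F => ∑ i : Fin (n+1), Polynomial.monomial (i : ℕ) (v i)))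
  intro f hf
  refine ⟨fun i => f.coeff i, ?_⟩
  show ∑ i : Fin (n+1), Polynomial.monomial (i : ℕ) (f.coeff i) = f
  rw [Fin.sum_univ_eq_sum_range (fun i => Polynomial.monomial i (f.coeff i)) (n+1)]
  exact (f.as_sum_range' (n+1) (Nat.lt_succ_of_le hf)).symm

lemma finite_setIrr (r : ℕ) :
    {l : Polynomial F | l.Monic ∧ Irreducible l ∧ l.natDegree = r}.Finite :=
  (finite_deg_le F r).subset (fun _ hl => le_of_eq hl.2.2)

lemma piq_eq_card (r : ℕ) : piq F r = (finite_setIrr F r).toFinset.card := by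
  rw [piq, ← Set.ncard_eq_toFinset_card _ (finite_setIrr F r)]
  exact Nat.card_coe_set_eq _

lemma piq_zero : piq F 0 = 0 := by
  rw [piq]
  have : IsEmpty {l : Polynomial F // l.Monic ∧ Irreducible l ∧ l.natDegree = 0} := by
    refine ⟨fun ⟨l, hm, hi, hd⟩ => hi.not_isUnit ?_⟩
    have hl : l = Polynomial.C (l.coeff 0) := l.eq_C_of_natDegree_eq_zero hd
    have hc : l.coeff 0 = 1 := by
      have := hm.leadingCoeff
      rwa [Polynomial.leadingCoeff, hd] at this
    rw [hl, hc, Polynomial.C_1]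
    exact isUnit_one
  simp [Nat.card_of_isEmpty]

lemma gauss_formula {n : ℕ} (hn : n ≠ 0) :
    ∑ d ∈ n.divisors, d * piq F d = Fintype.card F ^ n := by
  classical
  have hq1 : 1 < Fintype.card F := Fintype.one_lt_card
  obtain ⟨p, hcharp⟩ := CharP.exists F
  haveI := hcharp
  obtain ⟨m, hp, hcard⟩ := FiniteField.card F p
  haveI : Fact p.Prime := ⟨hp⟩
  have hpq : p ∣ Fintype.card F := hcard ▸ dvd_pow_self p m.pos.ne'
  set q := Fintype.card F with hqdef
  set g : Polynomial F := Polynomial.X ^ q ^ n - Polynomial.X with hgdef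
  have hsep : g.Separable := galois_poly_separable p (q ^ n) (hpq.trans (dvd_pow_self q hn))
  set K := g.SplittingField with hKdef
  haveI : CharP K p := charP_of_injective_algebraMap' F p
  haveI : Finite K := Module.finite_of_finite F
  haveI : Fintype K := Fintype.ofFinite K
  have hg0 : g ≠ 0 := FiniteField.X_pow_card_pow_sub_X_ne_zero F hn hq1
  have hgdeg : g.natDegree = q ^ n := FiniteField.X_pow_card_pow_sub_X_natDegree_eq F hn hq1
  have key : Fintype.card (g.rootSet K) = q ^ n := by
    rw [Polynomial.card_rootSet_eq_natDegree hsep (Polynomial.SplittingField.splits g), hgdeg]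
  -- every element of K is a root of g
  have huniv : g.rootSet K = Set.univ := by
    rw [Set.eq_univ_iff_forall]
    suffices h : ∀ x, x ∈ (⊤ : Subalgebra F K) → x ∈ g.rootSet K by
      intro x; exact h x trivial
    rw [← Polynomial.SplittingField.adjoin_rootSet]
    simp_rw [Algebra.mem_adjoin_iff]
    intro x hx
    have hqp : q ^ n = p ^ ((m : ℕ) * n) := by rw [hcard, ← pow_mul]
    refine Subring.closure_induction ?_ ?_ ?_ ?_ ?_ ?_ hx <;>
      simp_rw [Polynomial.mem_rootSet_of_ne hg0]
    · rintro x (⟨r, rfl⟩ | hx)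
      · simp only [hgdef, map_sub, map_pow, Polynomial.aeval_X]
        rw [← map_pow, FiniteField.pow_card_pow, sub_self]
      · rwa [Polynomial.mem_rootSet_of_ne hg0] at hx
    · simp only [hgdef, map_sub, map_pow, Polynomial.aeval_X]
      rw [zero_pow (pow_ne_zero n (by omega : q ≠ 0)), sub_zero]
    · simp only [hgdef, map_sub, map_pow, Polynomial.aeval_X, one_pow, sub_self]
    · intro x y _ _ hxr hyr
      simp only [hgdef, map_sub, map_pow, Polynomial.aeval_X, sub_eq_zero] at *
      rw [hqp, add_pow_char_pow, ← hqp, hxr, hyr]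
    · intro x _ hxr
      simp only [hgdef, map_sub, map_pow, Polynomial.aeval_X, sub_eq_zero] at *
      rw [hqp] at hxr ⊢
      rw [neg_pow, hxr, neg_one_pow_char_pow, neg_one_mul]
    · intro x y _ _ hxr hyr
      simp only [hgdef, map_sub, map_pow, Polynomial.aeval_X, sub_eq_zero] at *
      rw [mul_pow, hxr, hyr]
  have hcardK : Fintype.card K = q ^ n := by
    rw [← key]
    exact (Fintype.card_congr ((Equiv.setCongr huniv).trans (Equiv.Set.univ K))).symm
  have hfinrank : Module.finrank F K = n := by
    have h1 : Fintype.card K = q ^ Module.finrank F K := Module.card_eq_pow_finrank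
    have h2 : q ^ Module.finrank F K = q ^ n := by rw [← h1, hcardK]
    exact Nat.pow_right_injective hq1 h2
  -- the finset of monic irreducibles with degree dividing n
  set I : Finset (Polynomial F) := (finite_deg_le F n).toFinset.filter
      (fun f => f.Monic ∧ Irreducible f ∧ f.natDegree ∣ n) with hIdef
  have hmemI : ∀ f : Polynomial F,
      (f ∈ I ↔ f.Monic ∧ Irreducible f ∧ f.natDegree ∣ n) := by
    intro f
    simp only [hIdef, Finset.mem_filter, Set.Finite.mem_toFinset, Set.mem_setOf_eq,
      and_iff_right_iff_imp]
    rintro ⟨-, -, hdvd⟩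
    exact Nat.le_of_dvd (Nat.pos_of_ne_zero hn) hdvd
  have hmem : ∀ x : K, minpoly F x ∈ I := by
    intro x
    have hint : IsIntegral F x := IsIntegral.of_finite F x
    rw [hmemI]
    refine ⟨minpoly.monic hint, minpoly.irreducible hint, ?_⟩
    refine ⟨Module.finrank F⟮x⟯ K, ?_⟩
    rw [← hfinrank, ← Module.finrank_mul_finrank F F⟮x⟯ K,
      IntermediateField.adjoin.finrank hint]
  have hfiber : ∀ f ∈ I, (Finset.univ.filter fun x : K => minpoly F x = f).card
      = f.natDegree := by
    intro f hf
    obtain ⟨hmo, hirr, hdvd⟩ := (hmemI f).1 hf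
    have hf0 : f ≠ 0 := hirr.ne_zero
    have hfdvd : f ∣ g := by
      haveI : Fact (Irreducible f) := ⟨hirr⟩
      set L := AdjoinRoot f with hLdef
      set pb := AdjoinRoot.powerBasis hf0 with hpbdef
      haveI : FiniteDimensional F L := pb.finite
      haveI : Finite L := Module.finite_of_finite F
      haveI : Fintype L := Fintype.ofFinite L
      have hcardL : Fintype.card L = q ^ f.natDegree := by
        rw [Module.card_fintype pb.basis, Fintype.card_fin, hpbdef, AdjoinRoot.powerBasis_dim]
      have hroot : (AdjoinRoot.root f) ^ q ^ n = AdjoinRoot.root f := by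
        obtain ⟨c, hc⟩ := hdvd
        rw [hc, pow_mul, ← hcardL]
        exact FiniteField.pow_card_pow c _
      have haev : Polynomial.aeval (AdjoinRoot.root f) g = 0 := by
        simp only [hgdef, map_sub, map_pow, Polynomial.aeval_X]
        rw [hroot, sub_self]
      have hh := minpoly.dvd F (AdjoinRoot.root f) haev
      rwa [AdjoinRoot.minpoly_root hf0, hmo.leadingCoeff, inv_one, Polynomial.C_1,
        mul_one] at hh
    have hsepf : f.Separable := hsep.of_dvd hfdvd
    have hsplf : Polynomial.Splits (f.map (algebraMap F K)) :=
      (Polynomial.SplittingField.splits g).of_dvd (Polynomial.map_ne_zero hg0)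
        (Polynomial.map_dvd _ hfdvd)
    have hcardroot : Fintype.card (f.rootSet K) = f.natDegree :=
      Polynomial.card_rootSet_eq_natDegree hsepf hsplf
    rw [← hcardroot]
    have hseteq : (Finset.univ.filter fun x : K => minpoly F x = f)
        = (f.rootSet K).toFinset := by
      ext x
      simp only [Finset.mem_filter, Finset.mem_univ, true_and, Set.mem_toFinset,
        Polynomial.mem_rootSet]
      constructor
      · rintro rfl
        exact ⟨minpoly.ne_zero (IsIntegral.of_finite F x), minpoly.aeval F x⟩
      · rintro ⟨-, hx⟩
        exact (minpoly.eq_of_irreducible_of_monic hirr hx hmo).symm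
    rw [hseteq, Set.toFinset_card]
  have hcount : q ^ n = ∑ f ∈ I, f.natDegree := by
    rw [← hcardK, ← Finset.card_univ,
      Finset.card_eq_sum_card_fiberwise (fun x _ => hmem x)]
    exact Finset.sum_congr rfl hfiber
  -- regroup by degree
  have hmaps : ∀ f ∈ I, f.natDegree ∈ n.divisors := by
    intro f hf
    exact Nat.mem_divisors.2 ⟨((hmemI f).1 hf).2.2, hn⟩
  have hregroup : ∑ f ∈ I, f.natDegree = ∑ d ∈ n.divisors, d * piq F d := by
    rw [← Finset.sum_fiberwise_of_maps_to hmaps (fun f => f.natDegree)]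
    refine Finset.sum_congr rfl fun d hd => ?_
    obtain ⟨hddvd, -⟩ := Nat.mem_divisors.1 hd
    have hfe : I.filter (fun f => f.natDegree = d) = (finite_setIrr F d).toFinset := by
      ext f
      simp only [Finset.mem_filter, hmemI, Set.Finite.mem_toFinset, Set.mem_setOf_eq]
      constructor
      · rintro ⟨⟨h1, h2, -⟩, h4⟩; exact ⟨h1, h2, h4⟩
      · rintro ⟨h1, h2, h3⟩; exact ⟨⟨h1, h2, h3 ▸ hddvd⟩, h3⟩
    rw [hfe, Finset.sum_const_nat (fun f hf => ((finite_setIrr F d).mem_toFinset.1 hf).2.2),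
      piq_eq_card, mul_comm]
  rw [← hcount] at hregroup
  exact hregroup.symm

lemma piq_mul_le {r : ℕ} (hr : r ≠ 0) : r * piq F r ≤ Fintype.card F ^ r := by
  calc r * piq F r ≤ ∑ d ∈ r.divisors, d * piq F d :=
        Finset.single_le_sum (f := fun d => d * piq F d)
          (fun i _ => Nat.zero_le _) (Nat.mem_divisors_self r hr)
    _ = Fintype.card F ^ r := gauss_formula F hr

private lemma geom_nat_le {q : ℕ} (hq : 2 ≤ q) : ∀ m : ℕ,
    ∑ i ∈ Finset.range (m + 1), q ^ i ≤ 2 * q ^ m := by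
  intro m
  induction m with
  | zero => simp
  | succ k ih =>
    rw [Finset.sum_range_succ]
    have h1 : 2 * q ^ k ≤ q ^ (k + 1) := by
      rw [pow_succ']
      exact Nat.mul_le_mul_right _ hq
    calc ∑ i ∈ Finset.range (k + 1), q ^ i + q ^ (k + 1)
        ≤ 2 * q ^ k + q ^ (k + 1) := Nat.add_le_add_right ih _
      _ ≤ q ^ (k + 1) + q ^ (k + 1) := Nat.add_le_add_right h1 _
      _ = 2 * q ^ (k + 1) := (two_mul _).symm

lemma gauss_gap {r : ℕ} (hr : r ≠ 0) :
    Fintype.card F ^ r ≤ r * piq F r + 2 * Fintype.card F ^ (r / 2) := by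
  have hq1 : 1 < Fintype.card F := Fintype.one_lt_card
  set q := Fintype.card F with hqdef
  have hsplit : ∑ d ∈ r.divisors, d * piq F d
      = r * piq F r + ∑ d ∈ r.properDivisors, d * piq F d := by
    rw [← Nat.cons_self_properDivisors hr, Finset.sum_cons]
  have hbound : ∑ d ∈ r.properDivisors, d * piq F d ≤ 2 * q ^ (r / 2) := by
    have h1 : ∑ d ∈ r.properDivisors, d * piq F d ≤ ∑ d ∈ r.properDivisors, q ^ d := by
      refine Finset.sum_le_sum fun d hd => ?_
      have hd' := Nat.mem_properDivisors.1 hd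
      have hd0 : d ≠ 0 := by
        rintro rfl
        exact hr (Nat.eq_zero_of_zero_dvd hd'.1)
      exact piq_mul_le F hd0
    have h2 : r.properDivisors ⊆ Finset.range (r / 2 + 1) := by
      intro d hd
      have hd' := Nat.mem_properDivisors.1 hd
      obtain ⟨c, hc⟩ := hd'.1
      have hd0 : d ≠ 0 := by
        rintro rfl
        exact hr (Nat.eq_zero_of_zero_dvd ⟨c, hc⟩)
      have hc2 : 2 ≤ c := by
        by_contra hlt
        push_neg at hlt
        interval_cases c <;> omega
      have : d ≤ r / 2 := by
        rw [Nat.le_div_iff_mul_le (by norm_num : 0 < 2)]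
        calc d * 2 ≤ d * c := Nat.mul_le_mul_left d hc2
          _ = r := hc.symm
      exact Finset.mem_range.2 (Nat.lt_succ_of_le this)
    have h3 : ∑ d ∈ r.properDivisors, q ^ d ≤ ∑ d ∈ Finset.range (r / 2 + 1), q ^ d :=
      Finset.sum_le_sum_of_subset h2
    exact le_trans (le_trans h1 h3) (geom_nat_le hq1 _)
  calc q ^ r = ∑ d ∈ r.divisors, d * piq F d := (gauss_formula F hr).symm
    _ = r * piq F r + ∑ d ∈ r.properDivisors, d * piq F d := hsplit
    _ ≤ r * piq F r + 2 * q ^ (r / 2) := Nat.add_le_add_left hbound _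

end Counting

section Analysis

variable (F : Type*) [Field F] [Fintype F]

/-- the summand of the series in `A1` -/
noncomputable def tF (r : ℕ) : ℝ :=
  if r = 0 then 0 else
    ((piq F r : ℝ) - (Fintype.card F : ℝ) ^ r / r) * ((Fintype.card F : ℝ) ^ r)⁻¹

/-- geometric ratio -/
noncomputable def cF : ℝ := (Real.sqrt (Fintype.card F))⁻¹

lemma cF_pos : 0 < cF F := by
  have : (0:ℝ) < Fintype.card F := by
    exact_mod_cast Fintype.card_pos
  rw [cF]
  positivity

lemma cF_lt_one : cF F < 1 := by
  have hq : (1:ℝ) < Fintype.card F := by exact_mod_cast Fintype.one_lt_card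
  have h1 : 1 < Real.sqrt (Fintype.card F) := by
    rw [show (1:ℝ) = Real.sqrt 1 by simp]
    exact Real.sqrt_lt_sqrt (by norm_num) hq
  rw [cF]
  exact inv_lt_one_of_one_lt₀ h1

lemma abs_tF_le (r : ℕ) : |tF F r| ≤ 2 * cF F ^ r := by
  rcases eq_or_ne r 0 with rfl | hr
  · simp [tF]
  have hq1 : 1 < Fintype.card F := Fintype.one_lt_card
  have hqR : (1:ℝ) < (Fintype.card F : ℝ) := by exact_mod_cast hq1
  set qR : ℝ := (Fintype.card F : ℝ) with hqRdef
  have hq0 : (0:ℝ) < qR := lt_trans one_pos hqR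
  have hrpos : (0:ℝ) < r := by exact_mod_cast Nat.pos_of_ne_zero hr
  have hr1 : (1:ℝ) ≤ r := by exact_mod_cast Nat.one_le_iff_ne_zero.2 hr
  have hle : (piq F r : ℝ) ≤ qR ^ r / r := by
    rw [le_div_iff₀ hrpos]
    have h := piq_mul_le F hr
    calc (piq F r : ℝ) * r = ((r * piq F r : ℕ) : ℝ) := by push_cast; ring
      _ ≤ ((Fintype.card F ^ r : ℕ) : ℝ) := by exact_mod_cast h
      _ = qR ^ r := by push_cast; rfl
  have habs : |tF F r| = (qR ^ r / r - piq F r) * (qR ^ r)⁻¹ := by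
    rw [tF, if_neg hr, abs_mul, abs_inv, abs_pow, abs_of_pos hq0,
      abs_of_nonpos (by linarith), neg_sub]
  have hgap : qR ^ r / r - piq F r ≤ 2 * qR ^ (r / 2) := by
    have h := gauss_gap F hr
    have hcast : qR ^ r ≤ (r : ℝ) * piq F r + 2 * qR ^ (r / 2) := by
      rw [hqRdef]
      exact_mod_cast h
    rw [sub_le_iff_le_add, div_le_iff₀ hrpos, add_mul]
    have h2 : 2 * qR ^ (r / 2) ≤ 2 * qR ^ (r / 2) * r :=
      le_mul_of_one_le_right (by positivity) hr1
    nlinarith [hcast, h2]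
  have hkey : qR ^ (r / 2) * (qR ^ r)⁻¹ ≤ cF F ^ r := by
    have hs0 : (0:ℝ) < Real.sqrt qR := Real.sqrt_pos.2 hq0
    have hss : Real.sqrt qR ^ r * Real.sqrt qR ^ r = qR ^ r := by
      rw [← mul_pow, Real.mul_self_sqrt hq0.le]
    have hle2 : qR ^ (r / 2) ≤ Real.sqrt qR ^ r := by
      have ha : (0:ℝ) ≤ qR ^ (r / 2) := by positivity
      have hb : (0:ℝ) ≤ Real.sqrt qR ^ r := by positivity
      have hsq : (qR ^ (r / 2)) ^ 2 ≤ (Real.sqrt qR ^ r) ^ 2 := by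
        have e1 : (Real.sqrt qR ^ r) ^ 2 = qR ^ r := by
          rw [← pow_mul, mul_comm r 2, pow_mul, Real.sq_sqrt hq0.le]
        have e2 : (qR ^ (r / 2)) ^ 2 = qR ^ (r / 2 * 2) := by rw [← pow_mul]
        rw [e1, e2]
        exact pow_le_pow_right₀ hqR.le (by omega)
      calc qR ^ (r / 2) = Real.sqrt ((qR ^ (r / 2)) ^ 2) := (Real.sqrt_sq ha).symm
        _ ≤ Real.sqrt ((Real.sqrt qR ^ r) ^ 2) := Real.sqrt_le_sqrt hsq
        _ = Real.sqrt qR ^ r := Real.sqrt_sq hb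
    have : qR ^ (r / 2) * (qR ^ r)⁻¹ ≤ Real.sqrt qR ^ r * (qR ^ r)⁻¹ :=
      mul_le_mul_of_nonneg_right hle2 (by positivity)
    refine this.trans (le_of_eq ?_)
    rw [cF, inv_pow, ← hss, mul_inv, ← mul_assoc,
      mul_inv_cancel₀ (ne_of_gt (pow_pos hs0 r)), one_mul]
  calc |tF F r| = (qR ^ r / r - piq F r) * (qR ^ r)⁻¹ := habs
    _ ≤ 2 * qR ^ (r / 2) * (qR ^ r)⁻¹ :=
        mul_le_mul_of_nonneg_right hgap (by positivity)
    _ = 2 * (qR ^ (r / 2) * (qR ^ r)⁻¹) := by ring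
    _ ≤ 2 * cF F ^ r := by linarith [hkey]

lemma summable_tF : Summable (tF F) := by
  rw [← summable_abs_iff]
  exact Summable.of_nonneg_of_le (fun r => abs_nonneg _) (abs_tF_le F)
    ((summable_geometric_of_lt_one (cF_pos F).le (cF_lt_one F)).mul_left 2)

lemma tail_bound (n : ℕ) :
    |∑' r : ℕ, tF F (r + (n + 1))| ≤ (2 * cF F / (1 - cF F)) * cF F ^ n := by
  have hc0 := cF_pos F
  have hc1 := cF_lt_one F
  have hhs : HasSum (fun r : ℕ => 2 * cF F ^ (n + 1) * cF F ^ r)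
      (2 * cF F ^ (n + 1) * (1 - cF F)⁻¹) :=
    (hasSum_geometric_of_lt_one hc0.le hc1).mul_left _
  have hb : ‖∑' r : ℕ, tF F (r + (n + 1))‖ ≤ 2 * cF F ^ (n + 1) * (1 - cF F)⁻¹ := by
    refine tsum_of_norm_bounded hhs fun r => ?_
    rw [Real.norm_eq_abs]
    refine (abs_tF_le F _).trans (le_of_eq ?_)
    rw [pow_add]
    ring
  rw [Real.norm_eq_abs] at hb
  refine hb.trans (le_of_eq ?_)
  rw [pow_succ]
  field_simp

lemma c_pow_isBigO : (fun n : ℕ => cF F ^ n) =O[Filter.atTop] (fun n : ℕ => 1 / (n : ℝ)) := by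
  have hc0 := cF_pos F
  have hc1 := cF_lt_one F
  have hinv : 1 < (cF F)⁻¹ := (one_lt_inv₀ hc0).2 hc1
  have h := isLittleO_pow_const_const_pow_of_one_lt (R := ℝ) 1 hinv
  rw [Asymptotics.isLittleO_iff] at h
  have h1 := h (show (0:ℝ) < 1 by norm_num)
  rw [Asymptotics.isBigO_iff]
  refine ⟨1, ?_⟩
  filter_upwards [h1, Filter.eventually_ge_atTop 1] with n hn hn1
  have hnpos : (0:ℝ) < n := by exact_mod_cast hn1
  have hcp : (0:ℝ) < cF F ^ n := pow_pos hc0 n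
  rw [Real.norm_eq_abs, Real.norm_eq_abs, pow_one] at hn
  rw [abs_of_pos hnpos, abs_of_pos (by positivity : (0:ℝ) < ((cF F)⁻¹) ^ n), one_mul,
    inv_pow] at hn
  -- hn : (n : ℝ) ≤ (cF F ^ n)⁻¹
  rw [Real.norm_eq_abs, Real.norm_eq_abs, abs_of_pos hcp, one_mul,
    abs_of_pos (by positivity : (0:ℝ) < 1 / (n:ℝ))]
  rw [le_div_iff₀ hnpos, mul_comm]
  calc (n:ℝ) * cF F ^ n ≤ (cF F ^ n)⁻¹ * cF F ^ n := by
        exact mul_le_mul_of_nonneg_right hn hcp.le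
    _ = 1 := inv_mul_cancel₀ (ne_of_gt hcp)

lemma harmonic_bound {n : ℕ} (hn : n ≠ 0) :
    |(harmonic n : ℝ) - Real.log n - Real.eulerMascheroniConstant| ≤ 1 / n := by
  have hnpos : (0:ℝ) < n := by exact_mod_cast Nat.pos_of_ne_zero hn
  have h1 : Real.eulerMascheroniConstant < (harmonic n : ℝ) - Real.log n := by
    have h := Real.eulerMascheroniConstant_lt_eulerMascheroniSeq' n
    rwa [Real.eulerMascheroniSeq', if_neg hn] at h
  have h2 : (harmonic n : ℝ) - Real.log ((n : ℝ) + 1) < Real.eulerMascheroniConstant := by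
    have h := Real.eulerMascheroniSeq_lt_eulerMascheroniConstant n
    rwa [Real.eulerMascheroniSeq] at h
  have hlog : Real.log ((n : ℝ) + 1) - Real.log n ≤ 1 / n := by
    rw [← Real.log_div (by positivity) (ne_of_gt hnpos)]
    have h := Real.log_le_sub_one_of_pos (show (0:ℝ) < ((n:ℝ)+1)/n by positivity)
    refine h.trans (le_of_eq ?_)
    field_simp
    ring
  rw [abs_le]
  constructor
  · have : (0:ℝ) ≤ 1 / n := by positivity
    linarith
  · linarith

end Analysis

/-- Mertens' theorem for 𝔽_q[t] -/
theorem mertens_function_field (F : Type*) [Field F] [Fintype F] :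
    (fun n : ℕ =>
        (∑ᶠ l ∈ {l : Polynomial F | l.Monic ∧ Irreducible l ∧ l.natDegree ≤ n},
          ((Fintype.card F : ℝ) ^ l.natDegree)⁻¹) - (Real.log n + A1 F))
      =O[atTop] (fun n : ℕ => 1 / (n : ℝ)) := by
  classical
  have hsum := summable_tF F
  -- Step 1: the finsum is a finite sum, grouped by degree
  have hstep1 : ∀ n : ℕ,
      (∑ᶠ l ∈ {l : Polynomial F | l.Monic ∧ Irreducible l ∧ l.natDegree ≤ n},
        ((Fintype.card F : ℝ) ^ l.natDegree)⁻¹)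
      = ∑ r ∈ Finset.range (n + 1), (piq F r : ℝ) * ((Fintype.card F : ℝ) ^ r)⁻¹ := by
    intro n
    set J : Finset (Polynomial F) := (finite_deg_le F n).toFinset.filter
        (fun l => l.Monic ∧ Irreducible l) with hJ
    have hset : {l : Polynomial F | l.Monic ∧ Irreducible l ∧ l.natDegree ≤ n} = ↑J := by
      ext l
      simp only [Set.mem_setOf_eq, hJ, Finset.coe_filter, Set.Finite.mem_toFinset]
      tauto
    rw [hset, finsum_mem_coe_finset]
    have hmaps : ∀ l ∈ J, l.natDegree ∈ Finset.range (n + 1) := by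
      intro l hl
      rw [hJ, Finset.mem_filter, Set.Finite.mem_toFinset] at hl
      exact Finset.mem_range.2 (Nat.lt_succ_of_le hl.1)
    rw [← Finset.sum_fiberwise_of_maps_to hmaps
      (fun l => ((Fintype.card F : ℝ) ^ l.natDegree)⁻¹)]
    refine Finset.sum_congr rfl fun r hr => ?_
    have hrn : r ≤ n := Nat.lt_succ_iff.1 (Finset.mem_range.1 hr)
    have hfe : J.filter (fun l => l.natDegree = r) = (finite_setIrr F r).toFinset := by
      ext l
      simp only [Finset.mem_filter, hJ, Set.Finite.mem_toFinset, Set.mem_setOf_eq]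
      constructor
      · rintro ⟨⟨-, h2, h3⟩, h4⟩
        exact ⟨h2, h3, h4⟩
      · rintro ⟨h1, h2, h3⟩
        exact ⟨⟨h3 ▸ hrn, h1, h2⟩, h3⟩
    rw [hfe]
    have hconst : ∑ l ∈ (finite_setIrr F r).toFinset, ((Fintype.card F : ℝ) ^ l.natDegree)⁻¹
        = ∑ _l ∈ (finite_setIrr F r).toFinset, ((Fintype.card F : ℝ) ^ r)⁻¹ :=
      Finset.sum_congr rfl fun l hl => by
        rw [((finite_setIrr F r).mem_toFinset.1 hl).2.2]
    rw [hconst, Finset.sum_const, nsmul_eq_mul, piq_eq_card]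
  -- Step 2: split into harmonic part and tF part
  have hstep2 : ∀ n : ℕ,
      ∑ r ∈ Finset.range (n + 1), (piq F r : ℝ) * ((Fintype.card F : ℝ) ^ r)⁻¹
      = (harmonic n : ℝ) + ∑ r ∈ Finset.range (n + 1), tF F r := by
    intro n
    have hterm : ∀ r : ℕ, (piq F r : ℝ) * ((Fintype.card F : ℝ) ^ r)⁻¹
        = (if r = 0 then (0:ℝ) else (r : ℝ)⁻¹) + tF F r := by
      intro r
      rcases eq_or_ne r 0 with rfl | hr
      · simp [piq_zero, tF]
      · rw [if_neg hr, tF, if_neg hr]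
        have hq0 : ((Fintype.card F : ℝ)) ^ r ≠ 0 := by
          have : (0:ℝ) < (Fintype.card F : ℝ) := by exact_mod_cast Fintype.card_pos
          positivity
        have hr0 : (r : ℝ) ≠ 0 := Nat.cast_ne_zero.2 hr
        field_simp
        ring
    rw [Finset.sum_congr rfl fun r _ => hterm r, Finset.sum_add_distrib]
    have hH : ∑ r ∈ Finset.range (n + 1), (if r = 0 then (0:ℝ) else (r : ℝ)⁻¹)
        = (harmonic n : ℝ) := by
      rw [Finset.sum_range_succ' (fun r => if r = 0 then (0:ℝ) else (r : ℝ)⁻¹) n,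
        harmonic]
      push_cast
      simp [Nat.succ_ne_zero]
    rw [hH]
  have hA1 : A1 F = Real.eulerMascheroniConstant + ∑' r, tF F r := by
    simp only [A1, tF]
  -- pointwise identity
  have hmain : ∀ n : ℕ,
      (∑ᶠ l ∈ {l : Polynomial F | l.Monic ∧ Irreducible l ∧ l.natDegree ≤ n},
        ((Fintype.card F : ℝ) ^ l.natDegree)⁻¹) - (Real.log n + A1 F)
      = ((harmonic n : ℝ) - Real.log n - Real.eulerMascheroniConstant)
        - ∑' r : ℕ, tF F (r + (n + 1)) := by
    intro n
    rw [hstep1 n, hstep2 n, hA1]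
    have h := Summable.sum_add_tsum_nat_add (f := tF F) (n + 1) hsum
    rw [← h]
    ring
  have h1 : (fun n : ℕ => (harmonic n : ℝ) - Real.log n - Real.eulerMascheroniConstant)
      =O[atTop] (fun n : ℕ => 1 / (n : ℝ)) := by
    rw [Asymptotics.isBigO_iff]
    refine ⟨1, ?_⟩
    filter_upwards [Filter.eventually_ne_atTop 0] with n hn
    have hnpos : (0:ℝ) < n := by exact_mod_cast Nat.pos_of_ne_zero hn
    rw [Real.norm_eq_abs, Real.norm_eq_abs, one_mul,
      abs_of_pos (by positivity : (0:ℝ) < 1 / (n:ℝ))]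
    exact harmonic_bound hn
  have h2 : (fun n : ℕ => ∑' r : ℕ, tF F (r + (n + 1)))
      =O[atTop] (fun n : ℕ => cF F ^ n) := by
    rw [Asymptotics.isBigO_iff]
    refine ⟨2 * cF F / (1 - cF F), Filter.Eventually.of_forall fun n => ?_⟩
    rw [Real.norm_eq_abs, Real.norm_eq_abs,
      abs_of_pos (pow_pos (cF_pos F) n)]
    exact tail_bound F n
  have h3 := h1.sub (h2.trans (c_pow_isBigO F))
  refine h3.congr' (Filter.EventuallyEq.of_eq (funext fun n => (hmain n).symm))
    Filter.EventuallyEq.rfl
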